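/- For any element a of a coherent quantale A, ρ(a) = (a*)_*, i.e., the radical of a equals the join of all compact elements c with λ(c) in the ideal a* = {λ(c) | c ∈ K(A), c ≤ a} of the reticulation. -/
import Mathlib


open CompleteLattice

/-- A commutative unital quantale: a complete lattice with a commutative monoid
multiplication distributing over arbitrary joins, whose unit is the top element. -/
class CommQuantale (A : Type*) extends CompleteLattice A, CommMonoid A where
  one_eq_top : (1 : A) = ⊤
  mul_sSup : ∀ (a : A) (S : Set A), a * sSup S = ⨆ b ∈ S, a * b

namespace CommQuantale

variable {A : Type*} [CommQuantale A]

/-- A coherent quantale: algebraic, with `1 = ⊤` compact and compacts closed under `*`. -/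
def Coherent (A : Type*) [CommQuantale A] : Prop :=
  (∀ a : A, a = sSup {c : A | IsCompactElement c ∧ c ≤ a}) ∧
  IsCompactElement (⊤ : A) ∧
  ∀ c d : A, IsCompactElement c → IsCompactElement d → IsCompactElement (c * d)

/-- m-prime element. -/
def MPrime (p : A) : Prop :=
  p < ⊤ ∧ ∀ a b : A, a * b ≤ p → a ≤ p ∨ b ≤ p

/-- The radical of an element. -/
def rad (a : A) : A := sInf {p : A | MPrime p ∧ a ≤ p}

/-- Maximal element of `A \ {1}`. -/
def MaxElem (m : A) : Prop := m < ⊤ ∧ ∀ x : A, m ≤ x → x < ⊤ → x = m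

/-- Radical element. -/
def RadElem (a : A) : Prop := rad a = a

/-- Residuation `a → b`. -/
def res (a b : A) : A := sSup {x : A | a * x ≤ b}

/-- Complemented element (member of the Boolean center `B(A)`). -/
def Complemented (e : A) : Prop := ∃ f : A, e ⊔ f = ⊤ ∧ e ⊓ f = ⊥

end CommQuantale

open CommQuantale

/-- A reticulation of a coherent quantale `A`: a bounded distributive lattice `L`
with a map `l` which is surjective from the compacts of `A` onto `L` and satisfies
the reticulation axioms on compact elements. -/
structure IsReticulation (A : Type*) [CommQuantale A] (L : Type*)
    [DistribLattice L] [BoundedOrder L] (l : A → L) : Prop where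
  surj : ∀ y : L, ∃ c : A, IsCompactElement c ∧ l c = y
  le_sup : ∀ a b : A, IsCompactElement a → IsCompactElement b → l (a ⊔ b) ≤ l a ⊔ l b
  map_mul : ∀ a b : A, IsCompactElement a → IsCompactElement b → l (a * b) = l a ⊓ l b
  le_iff : ∀ a b : A, IsCompactElement a → IsCompactElement b →
    (l a ≤ l b ↔ ∃ n : ℕ, 1 ≤ n ∧ a ^ n ≤ b)

/-- An ideal of a lattice, as a set. -/
def IsIdealSet {L : Type*} [Lattice L] (I : Set L) : Prop :=
  I.Nonempty ∧ (∀ x ∈ I, ∀ y : L, y ≤ x → y ∈ I) ∧ ∀ x ∈ I, ∀ y ∈ I, x ⊔ y ∈ I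

/-- A prime ideal of a lattice, as a set. -/
def IsPrimeIdealSet {L : Type*} [Lattice L] (I : Set L) : Prop :=
  IsIdealSet I ∧ I ≠ Set.univ ∧ ∀ x y : L, x ⊓ y ∈ I → x ∈ I ∨ y ∈ I

/-- The ideal `a* = {l c | c compact, c ≤ a}` of the reticulation. -/
def qstar {A : Type*} [CommQuantale A] {L : Type*} (l : A → L) (a : A) : Set L :=
  l '' {c : A | IsCompactElement c ∧ c ≤ a}

/-- The element `I_* = ⋁{c compact | l c ∈ I}` of the quantale. -/
def qistar {A : Type*} [CommQuantale A] {L : Type*} (l : A → L) (I : Set L) : A :=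
  sSup {c : A | IsCompactElement c ∧ l c ∈ I}


section Aux

variable {A : Type*} [CommQuantale A]

theorem cq_mul_sup (x y z : A) : x * (y ⊔ z) = x * y ⊔ x * z := by
  have h := CommQuantale.mul_sSup x {y, z}
  rw [sSup_insert, sSup_singleton] at h
  rw [h]
  rw [iSup_insert]
  simp

theorem cq_mul_le_mul_left (x : A) {y z : A} (hyz : y ≤ z) : x * y ≤ x * z := by
  have h : x * (y ⊔ z) = x * y ⊔ x * z := cq_mul_sup x y z
  rw [sup_eq_right.mpr hyz] at h
  rw [h]; exact le_sup_left

theorem cq_mul_le_left (x y : A) : x * y ≤ x := by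
  have : x * y ≤ x * ⊤ := cq_mul_le_mul_left x le_top
  rwa [← CommQuantale.one_eq_top, mul_one] at this

theorem cq_mul_le_right (x y : A) : x * y ≤ y := by
  rw [mul_comm]; exact cq_mul_le_left y x

theorem cq_mul_le_mul {x y z w : A} (h1 : x ≤ z) (h2 : y ≤ w) : x * y ≤ z * w :=
  calc x * y ≤ x * w := cq_mul_le_mul_left x h2
    _ = w * x := mul_comm _ _
    _ ≤ w * z := cq_mul_le_mul_left w h1
    _ = z * w := mul_comm _ _

theorem cq_pow_compact (hA : Coherent A) {c : A} (hc : IsCompactElement c) :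
    ∀ n : ℕ, IsCompactElement (c ^ n) := by
  intro n
  induction n with
  | zero => rw [pow_zero, CommQuantale.one_eq_top]; exact hA.2.1
  | succ k ih => rw [pow_succ]; exact hA.2.2 _ _ ih hc

theorem cq_pow_le_prime {p c : A} (hp : MPrime p) :
    ∀ n : ℕ, 1 ≤ n → c ^ n ≤ p → c ≤ p := by
  intro n
  induction n with
  | zero => omega
  | succ k ih =>
    intro _ hle
    rcases Nat.eq_zero_or_pos k with rfl | hk
    · rwa [pow_one] at hle
    · rw [pow_succ] at hle
      rcases hp.2 _ _ hle with h1 | h2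
      · exact ih hk h1
      · exact h2

theorem cq_l_pow {L : Type*} [DistribLattice L] [BoundedOrder L] {l : A → L}
    (hA : Coherent A) (h : IsReticulation A L l) {c : A} (hc : IsCompactElement c) :
    ∀ n : ℕ, 1 ≤ n → l (c ^ n) = l c := by
  intro n
  induction n with
  | zero => omega
  | succ k ih =>
    intro _
    rcases Nat.eq_zero_or_pos k with rfl | hk
    · rw [pow_one]
    · rw [pow_succ, h.map_mul _ _ (cq_pow_compact hA hc k) hc, ih hk, inf_idem]

/-- Every compact `c` with `c ≤ rad a` has some power below `a`. -/
theorem cq_compact_le_rad (hA : Coherent A) {a c : A} (hc : IsCompactElement c)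
    (hle : c ≤ rad a) : ∃ n : ℕ, 1 ≤ n ∧ c ^ n ≤ a := by
  by_contra hcon
  push_neg at hcon
  set F : Set A := {x | a ≤ x ∧ ∀ n : ℕ, 1 ≤ n → ¬ c ^ n ≤ x} with hF
  have haF : a ∈ F := ⟨le_rfl, fun n hn h => hcon n hn h⟩
  obtain ⟨p, hap, hpF, hpmax⟩ := zorn_le_nonempty₀ F (fun S hS hchain y hy => by
    refine ⟨sSup S, ⟨(hS hy).1.trans (le_sSup hy), ?_⟩, fun z hz => le_sSup hz⟩
    intro n hn hle2
    obtain ⟨x, hxS, hx⟩ := (CompleteLattice.isCompactElement_iff_le_of_directed_sSup_le A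
      (c ^ n)).mp (cq_pow_compact hA hc n) S ⟨y, hy⟩ hchain.directedOn hle2
    exact (hS hxS).2 n hn hx) a haF
  have hpprime : MPrime p := by
    constructor
    · rcases lt_or_eq_of_le (le_top : p ≤ ⊤) with h | h
      · exact h
      · exact absurd (by rw [pow_one, h]; exact le_top) (hpF.2 1 le_rfl)
    · intro x y hxy
      by_contra hcon2
      push_neg at hcon2
      obtain ⟨hx, hy⟩ := hcon2
      have hpx : p ⊔ x ∉ F := fun hmem =>
        hx (le_sup_right.trans (hpmax hmem le_sup_left))
      have hpy : p ⊔ y ∉ F := fun hmem =>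
        hy (le_sup_right.trans (hpmax hmem le_sup_left))
      simp only [hF, Set.mem_setOf_eq, not_and, not_forall, not_not] at hpx hpy
      obtain ⟨m, hm1, hm2⟩ := hpx (hpF.1.trans le_sup_left)
      obtain ⟨k, hk1, hk2⟩ := hpy (hpF.1.trans le_sup_left)
      apply hpF.2 (m + k) (by omega)
      have key : (p ⊔ x) * (p ⊔ y) ≤ p := by
        rw [cq_mul_sup]
        apply sup_le
        · exact cq_mul_le_right _ _
        · rw [mul_comm, cq_mul_sup]
          apply sup_le (cq_mul_le_right _ _)
          rw [mul_comm]
          exact hxy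
      calc c ^ (m + k) = c ^ m * c ^ k := pow_add c m k
        _ ≤ (p ⊔ x) * (p ⊔ y) := cq_mul_le_mul hm2 hk2
        _ ≤ p := key
  have : rad a ≤ p := sInf_le ⟨hpprime, hpF.1⟩
  exact hpF.2 1 le_rfl (by rw [pow_one]; exact hle.trans this)

end Aux

theorem stmt13 {A : Type*} [CommQuantale A]
    {L : Type*} [DistribLattice L] [BoundedOrder L]
    (hA : Coherent A) {l : A → L} (h : IsReticulation A L l) (a : A) :
    rad a = qistar l (qstar l a) := by
  apply le_antisymm
  · -- rad a ≤ sSup {c compact | l c ∈ a*}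
    conv_lhs => rw [hA.1 (rad a)]
    apply _root_.sSup_le
    rintro c ⟨hc, hcle⟩
    obtain ⟨n, hn1, hn2⟩ := cq_compact_le_rad hA hc hcle
    apply _root_.le_sSup
    refine ⟨hc, ⟨c ^ n, ⟨cq_pow_compact hA hc n, hn2⟩, cq_l_pow hA h hc n hn1⟩⟩
  · -- sSup ≤ rad a
    apply _root_.sSup_le
    rintro c ⟨hc, d, ⟨hd, hda⟩, hld⟩
    have hlc : l c ≤ l d := le_of_eq hld.symm
    obtain ⟨n, hn1, hn2⟩ := (h.le_iff c d hc hd).mp hlc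
    apply _root_.le_sInf
    rintro p ⟨hp, hap⟩
    exact cq_pow_le_prime hp n hn1 (hn2.trans (hda.trans hap))
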